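/- If {B_1,...,B_m} is an (n,m,K,a,λ)-SWEDF over an abelian group G, then for every nonzero δ ∈ G, Σ_{i=1}^m N_i(δ)/k_i = λ/k̃, where N_i(δ) = #{(b_i, b_j) : b_i ∈ B_i, b_j ∈ ⋃_{t≠i} B_t, b_j − b_i = δ}, k_i = |B_i|, and k̃ = lcm(k_1,...,k_m). In other words, an (n,m,K,a,λ)-SWEDF is an (n,m,K,d)-RWEDF with d = λ/k̃. -/

import Mathlib

/-- The multiset of external differences `{x - y : x ∈ X, y ∈ Y}` (with multiplicity). -/
def extDiff {G : Type*} [Sub G] (X Y : Multiset G) : Multiset G :=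
  X.bind fun x => Y.map fun y => x - y

/-- The multiset `⋃_{i ≠ j} D(B_i, B̃_j)`, where the standard weighted multiset `B̃_j`
repeats each element of `B_j` exactly `ktil / |B_j|` times. -/
def wtotal {G : Type*} [Sub G] {m : ℕ} (B : Fin m → Finset G) (ktil : ℕ) : Multiset G :=
  ∑ i : Fin m, ∑ j : Fin m,
    if i ≠ j then extDiff (B i).val ((ktil / (B j).card) • (B j).val) else 0

lemma count_extDiff_nsmul {G : Type*} [Sub G] [DecidableEq G] (X Y : Multiset G) (c : ℕ)
    (δ : G) : Multiset.count δ (extDiff X (c • Y)) = c * Multiset.count δ (extDiff X Y) := by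
  simp [extDiff, Multiset.count_bind, Multiset.map_nsmul, Multiset.count_nsmul,
    Multiset.sum_map_mul_left]

/-- An `(n,m,K,a,λ)`-SWEDF is an `(n,m,K,d)`-RWEDF with `d = λ/k̃`:
for every nonzero `δ`, `Σ_i N_i(δ)/k_i = λ/k̃`. -/
theorem stmt19 {G : Type*} [AddCommGroup G] [Fintype G] [DecidableEq G]
    (n m : ℕ) (hn : Fintype.card G = n)
    (B : Fin m → Finset G)
    (hdisj : ∀ i j, i ≠ j → Disjoint (B i) (B j))
    (hne : ∀ i, (B i).Nonempty)
    (a ktil : ℕ) (ha : a = ∑ i, (B i).card)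
    (hktil : ktil = Finset.univ.lcm fun i => (B i).card)
    (lam : ℕ) (hlampos : 0 < lam)
    (hSWEDF : ∀ δ : G, δ ≠ 0 → Multiset.count δ (wtotal B ktil) = lam) :
    ∀ δ : G, δ ≠ 0 →
      ∑ i : Fin m,
        ((∑ j : Fin m, if j ≠ i then
            Multiset.count δ (extDiff (B j).val (B i).val) else 0 : ℕ) : ℚ) /
          (B i).card = (lam : ℚ) / ktil := by
  intro δ hδ
  have hki : ∀ i, 0 < (B i).card := fun i => Finset.card_pos.mpr (hne i)
  have hdvd : ∀ i, (B i).card ∣ ktil := by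
    intro i; rw [hktil]; exact Finset.dvd_lcm (Finset.mem_univ i)
  have hktil0 : ktil ≠ 0 := by
    rw [hktil]
    intro h
    rw [Finset.lcm_eq_zero_iff] at h
    obtain ⟨i, -, hi⟩ := h
    exact (hki i).ne' hi
  -- key natural-number identity
  have hcount : Multiset.count δ (wtotal B ktil)
      = ∑ i : Fin m, (ktil / (B i).card) *
          ∑ j : Fin m, if j ≠ i then
            Multiset.count δ (extDiff (B j).val (B i).val) else 0 := by
    calc Multiset.count δ (wtotal B ktil)
        = ∑ i : Fin m, ∑ j : Fin m, if i ≠ j then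
            (ktil / (B j).card) * Multiset.count δ (extDiff (B i).val (B j).val) else 0 := by
          rw [wtotal, Multiset.count_sum']
          refine Finset.sum_congr rfl fun i _ => ?_
          rw [Multiset.count_sum']
          refine Finset.sum_congr rfl fun j _ => ?_
          split <;> simp [count_extDiff_nsmul]
      _ = ∑ j : Fin m, ∑ i : Fin m, (ktil / (B j).card) *
            (if i ≠ j then Multiset.count δ (extDiff (B i).val (B j).val) else 0) := by
          rw [Finset.sum_comm]
          exact Finset.sum_congr rfl fun j _ => Finset.sum_congr rfl fun i _ => by
            rw [mul_ite, mul_zero]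
      _ = _ := by
          exact Finset.sum_congr rfl fun j _ => by rw [← Finset.mul_sum]
  have hkey : ∑ i : Fin m, (ktil / (B i).card) *
      ∑ j : Fin m, (if j ≠ i then
        Multiset.count δ (extDiff (B j).val (B i).val) else 0) = lam := by
    rw [← hcount]; exact hSWEDF δ hδ
  -- pass to ℚ
  have main : ∀ N : Fin m → ℕ,
      (∑ i : Fin m, (ktil / (B i).card) * N i = lam) →
      ∑ i : Fin m, (N i : ℚ) / (B i).card = (lam : ℚ) / ktil := by
    intro N hNs
    have hktilQ : (ktil : ℚ) ≠ 0 := Nat.cast_ne_zero.mpr hktil0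
    rw [eq_div_iff hktilQ, Finset.sum_mul, ← hNs, Nat.cast_sum]
    refine Finset.sum_congr rfl fun i _ => ?_
    have h1 : ((B i).card : ℚ) ≠ 0 := Nat.cast_ne_zero.mpr (hki i).ne'
    rw [Nat.cast_mul, Nat.cast_div (hdvd i) h1]
    field_simp
  exact main _ hkey
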